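/- Let Γ be a profinite group isomorphic to Z_p, let Γ_n be its unique open subgroup of index p^n, and let U be a finitely generated Z_p-module with a continuous Γ-action. If the coinvariant module U_{Γ_n} is finite for every n, then the invariant submodule U^{Γ_n} is finite for every n, and moreover U^{Γ_n} is contained in U[p^∞]; in particular the orders |U^{Γ_n}| are bounded independently of n. -/

import Mathlib

lemma fg_torsion_finite (p : ℕ) [Fact p.Prime] (M : Type) [AddCommGroup M] [Module ℤ_[p] M]
    [Module.Finite ℤ_[p] M] (hM : Module.IsTorsion ℤ_[p] M) : Finite M := by
  classical
  have hpow : ∀ x : M, ∃ k : ℕ, (p : ℤ_[p]) ^ k • x = 0 := by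
    intro x
    obtain ⟨a, ha⟩ := hM (x := x)
    have hane : (a : ℤ_[p]) ≠ 0 := nonZeroDivisors.coe_ne_zero a
    obtain ⟨k, u, hu⟩ :=
      IsDiscreteValuationRing.eq_unit_mul_pow_irreducible hane (PadicInt.irreducible_p)
    refine ⟨k, ?_⟩
    have hpk : (p : ℤ_[p]) ^ k = (↑u⁻¹ : ℤ_[p]) * a := by
      rw [hu, ← mul_assoc, Units.inv_mul, one_mul]
    have ha' : (a : ℤ_[p]) • x = 0 := ha
    rw [hpk, mul_smul, ha', smul_zero]
  obtain ⟨s, hs⟩ : ∃ s : Finset M, Submodule.span ℤ_[p] (s : Set M) = ⊤ :=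
    Module.Finite.fg_top (R := ℤ_[p]) (M := M)
  choose K hK using hpow
  set k := s.sup K with hk
  have huniv : ∀ x : M, (p : ℤ_[p]) ^ k • x = 0 := by
    have hle : (⊤ : Submodule ℤ_[p] M) ≤
        LinearMap.ker ((p : ℤ_[p]) ^ k • (LinearMap.id : M →ₗ[ℤ_[p]] M)) := by
      rw [← hs, Submodule.span_le]
      intro x hx
      simp only [SetLike.mem_coe, LinearMap.mem_ker, LinearMap.smul_apply, LinearMap.id_apply]
      have hxk : K x ≤ k := Finset.le_sup (by exact_mod_cast hx)
      calc (p : ℤ_[p]) ^ k • x = (p : ℤ_[p]) ^ (k - K x) • ((p : ℤ_[p]) ^ (K x) • x) := by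
            rw [← mul_smul, ← pow_add, Nat.sub_add_cancel hxk]
        _ = 0 := by rw [hK x, smul_zero]
    intro x
    simpa using hle (Submodule.mem_top (x := x))
  set A : AddSubgroup M := AddSubgroup.closure (s : Set M) with hA
  have hsmul : ∀ (c : ℤ_[p]) (y : M), y ∈ A → c • y ∈ A := by
    intro c y hy
    obtain ⟨d, hd⟩ := Ideal.mem_span_singleton'.mp (PadicInt.appr_spec k c)
    have h1 : c • y = ((PadicInt.appr c k : ℕ) : ℤ_[p]) • y := by
      have h2 : (c - ((PadicInt.appr c k : ℕ) : ℤ_[p])) • y = 0 := by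
        rw [← hd, mul_comm, mul_smul, huniv]
      rw [sub_smul, sub_eq_zero] at h2
      exact h2
    rw [h1, Nat.cast_smul_eq_nsmul]
    exact AddSubgroup.nsmul_mem A hy _
  let S : Submodule ℤ_[p] M :=
    { carrier := (A : Set M)
      add_mem' := fun h1 h2 => A.add_mem h1 h2
      zero_mem' := A.zero_mem
      smul_mem' := fun c x hx => hsmul c x hx }
  have hAtop : ∀ x : M, x ∈ A := by
    intro x
    have hx : x ∈ Submodule.span ℤ_[p] (s : Set M) := by rw [hs]; trivial
    have : Submodule.span ℤ_[p] (s : Set M) ≤ S :=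
      Submodule.span_le.mpr (fun y hy => AddSubgroup.subset_closure hy)
    exact this hx
  haveI : AddGroup.FG M := by
    rw [AddGroup.fg_iff]
    exact ⟨(s : Set M), (AddSubgroup.eq_top_iff' _).mpr hAtop, s.finite_toSet⟩
  have htor : AddMonoid.IsTorsion M := by
    intro x
    rw [isOfFinAddOrder_iff_nsmul_eq_zero]
    refine ⟨p ^ k, pow_pos (Fact.out (p := p.Prime)).pos k, ?_⟩
    rw [← Nat.cast_smul_eq_nsmul ℤ_[p]]
    push_cast
    exact huniv x
  exact AddCommGroup.finite_of_fg_torsion M htor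

theorem stmt9 (p : ℕ) [Fact p.Prime] (U : Type) [AddCommGroup U] [Module ℤ_[p] U]
    [Module.Finite ℤ_[p] U]
    (γ : Module.End ℤ_[p] U) (hγ : Function.Bijective γ)
    (hcoinv : ∀ n : ℕ, Finite (U ⧸ LinearMap.range (γ ^ (p ^ n) - 1))) :
    (∀ n : ℕ, Finite (LinearMap.ker (γ ^ (p ^ n) - 1))) ∧
    (∀ n : ℕ, LinearMap.ker (γ ^ (p ^ n) - 1) ≤ Submodule.torsion ℤ_[p] U) ∧
    ∃ B : ℕ, ∀ n : ℕ, Nat.card (LinearMap.ker (γ ^ (p ^ n) - 1)) ≤ B := by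
  classical
  haveI : IsNoetherian ℤ_[p] U := isNoetherian_of_isNoetherianRing_of_finite ℤ_[p] U
  have key : ∀ n : ℕ, Module.IsTorsion ℤ_[p] (LinearMap.ker (γ ^ (p ^ n) - 1)) := by
    intro n
    set f : Module.End ℤ_[p] U := γ ^ (p ^ n) - 1 with hf
    haveI hQfin : Finite (U ⧸ LinearMap.range f) := hcoinv n
    have hQtor : Module.IsTorsion ℤ_[p] (U ⧸ LinearMap.range f) := by
      intro x
      have hcard : 0 < Nat.card (U ⧸ LinearMap.range f) := Nat.card_pos
      refine ⟨⟨((Nat.card (U ⧸ LinearMap.range f) : ℕ) : ℤ_[p]),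
        mem_nonZeroDivisors_of_ne_zero (Nat.cast_ne_zero.mpr hcard.ne')⟩, ?_⟩
      show ((Nat.card (U ⧸ LinearMap.range f) : ℕ) : ℤ_[p]) • x = 0
      rw [Nat.cast_smul_eq_nsmul]
      exact card_nsmul_eq_zero'
    haveI : Module.Finite ℤ_[p] (LinearMap.ker f) :=
      Module.Finite.iff_fg.mpr (IsNoetherian.noetherian _)
    have hQrank : Module.finrank ℤ_[p] (U ⧸ LinearMap.range f) = 0 :=
      Module.finrank_eq_zero_iff_isTorsion.mpr hQtor
    have h1 : Module.finrank ℤ_[p] (U ⧸ LinearMap.range f)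
        + Module.finrank ℤ_[p] (LinearMap.range f) = Module.finrank ℤ_[p] U :=
      Submodule.finrank_quotient_add_finrank _
    have h2 : Module.finrank ℤ_[p] (U ⧸ LinearMap.ker f)
        + Module.finrank ℤ_[p] (LinearMap.ker f) = Module.finrank ℤ_[p] U :=
      Submodule.finrank_quotient_add_finrank _
    have h3 : Module.finrank ℤ_[p] (U ⧸ LinearMap.ker f)
        = Module.finrank ℤ_[p] (LinearMap.range f) := f.quotKerEquivRange.finrank_eq
    have hker : Module.finrank ℤ_[p] (LinearMap.ker f) = 0 := by omega
    exact Module.finrank_eq_zero_iff_isTorsion.mp hker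
  have hfin : ∀ n : ℕ, Finite (LinearMap.ker (γ ^ (p ^ n) - 1)) := by
    intro n
    haveI : Module.Finite ℤ_[p] (LinearMap.ker (γ ^ (p ^ n) - 1)) :=
      Module.Finite.iff_fg.mpr (IsNoetherian.noetherian _)
    exact fg_torsion_finite p _ (key n)
  have hle : ∀ n : ℕ, LinearMap.ker (γ ^ (p ^ n) - 1) ≤ Submodule.torsion ℤ_[p] U := by
    intro n x hx
    obtain ⟨a, ha⟩ := key n (x := ⟨x, hx⟩)
    refine ⟨a, ?_⟩
    have := congrArg (Subtype.val) ha
    simpa using this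
  refine ⟨hfin, hle, ?_⟩
  -- monotone chain of kernels
  have hmono : Monotone (fun n : ℕ => LinearMap.ker (γ ^ (p ^ n) - 1)) := by
    intro a b hab x hx
    simp only [LinearMap.mem_ker, LinearMap.sub_apply, Module.End.one_apply, sub_eq_zero] at hx ⊢
    have hfix : ∀ t : ℕ, ((γ ^ (p ^ a)) ^ t) x = x := by
      intro t
      induction t with
      | zero => simp
      | succ t ih => rw [pow_succ', Module.End.mul_apply, ih, hx]
    have : γ ^ (p ^ b) = (γ ^ (p ^ a)) ^ (p ^ (b - a)) := by
      rw [← pow_mul, ← pow_add, Nat.add_sub_cancel' hab]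
    rw [this, hfix]
  obtain ⟨N, hN⟩ := monotone_stabilizes_iff_noetherian.mpr ‹_›
    ⟨fun n : ℕ => LinearMap.ker (γ ^ (p ^ n) - 1), hmono⟩
  refine ⟨Nat.card (LinearMap.ker (γ ^ (p ^ N) - 1)), fun n => ?_⟩
  have h1 : LinearMap.ker (γ ^ (p ^ n) - 1) ≤ LinearMap.ker (γ ^ (p ^ N) - 1) :=
    le_trans (hmono (le_max_left n N)) (le_of_eq (hN (max n N) (le_max_right n N)).symm)
  haveI := hfin N
  exact Nat.card_le_card_of_injective (Submodule.inclusion h1) (Submodule.inclusion_injective h1)
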